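/- Let x_k be a real-valued random variable and y_0, …, y_k real-valued random variables (side information), and let x̂_k = f_k(y_0, …, y_k) for a measurable function f_k : ℝ^{k+1} → ℝ. Assume the estimation error x_k − x̂_k has a probability density function with compact support, and that the differential entropies appearing below are well defined and finite. Then the length of the support of x_k − x̂_k satisfies |supp(x_k − x̂_k)| ≥ 2^{h(x_k | y_0,…,y_k)}, and equality holds if and only if x_k − x̂_k is uniformly distributed on its support and I(x_k − x̂_k; (y_0,…,y_k)) = 0. -/

import Mathlib

open MeasureTheory Filter ProbabilityTheory

noncomputable section

/-- Differential entropy (base 2) of a random variable `X : Ω → E` under `P`,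
computed from the density of its distribution w.r.t. the reference (volume) measure. -/
def dEnt {Ω E : Type*} [MeasurableSpace Ω] [MeasureSpace E]
    (P : Measure Ω) (X : Ω → E) : ℝ :=
  -∫ t, ((P.map X).rnDeriv volume t).toReal * Real.logb 2 ((P.map X).rnDeriv volume t).toReal

/-- Conditional differential entropy `h(X | Y) = h(X, Y) - h(Y)`. -/
def condEnt {Ω E F : Type*} [MeasurableSpace Ω] [MeasureSpace E] [MeasureSpace F]
    (P : Measure Ω) (X : Ω → E) (Y : Ω → F) : ℝ :=
  dEnt P (fun ω => (X ω, Y ω)) - dEnt P Y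

/-- Mutual information `I(X; Y) = h(X) + h(Y) - h(X, Y)`. -/
def mutInfo {Ω E F : Type*} [MeasurableSpace Ω] [MeasureSpace E] [MeasureSpace F]
    (P : Measure Ω) (X : Ω → E) (Y : Ω → F) : ℝ :=
  dEnt P X + dEnt P Y - dEnt P (fun ω => (X ω, Y ω))

/-- Conditional mutual information `I(X; Y | Z) = h(X | Z) - h(X | Y, Z)`. -/
def condMutInfo {Ω E F G : Type*} [MeasurableSpace Ω] [MeasureSpace E] [MeasureSpace F]
    [MeasureSpace G] (P : Measure Ω) (X : Ω → E) (Y : Ω → F) (Z : Ω → G) : ℝ :=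
  condEnt P X Z - condEnt P X (fun ω => (Y ω, Z ω))

/-- The differential entropy of `X` is well defined (a density exists and the
entropy integral converges). -/
def entWellDef {Ω E : Type*} [MeasurableSpace Ω] [MeasureSpace E]
    (P : Measure Ω) (X : Ω → E) : Prop :=
  HasPDF X P volume ∧
    Integrable (fun t =>
      ((P.map X).rnDeriv volume t).toReal * Real.logb 2 ((P.map X).rnDeriv volume t).toReal)

/-- The (topological) support of the distribution of a real random variable. -/
def mSupp {Ω : Type*} [MeasurableSpace Ω] (P : Measure Ω) (X : Ω → ℝ) : Set ℝ :=
  {e | ∀ U ∈ nhds e, P.map X U ≠ 0}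

/-- The length (Lebesgue measure) of the support of the distribution of `X`. -/
def suppLen {Ω : Type*} [MeasurableSpace Ω] (P : Measure Ω) (X : Ω → ℝ) : ℝ :=
  (volume (mSupp P X)).toReal

/-- Maximum deviation of `X` from its mean, over the support of its distribution. -/
def Dmax {Ω : Type*} [MeasurableSpace Ω] (P : Measure Ω) (X : Ω → ℝ) : ℝ :=
  sSup ((fun e => |e - ∫ ω, X ω ∂P|) '' mSupp P X)

/-- `X` is uniformly distributed on the support of its distribution. -/
def UnifOnSupp {Ω : Type*} [MeasurableSpace Ω] (P : Measure Ω) (X : Ω → ℝ) : Prop :=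
  pdf.IsUniform X (mSupp P X) P

end

section Helpers
noncomputable section

-- pointwise real lemma
lemma real_aux {a b : ℝ} (ha : 0 ≤ a) (hb : 0 ≤ b) (hab : b = 0 → a = 0) :
    a * Real.log b - a * Real.log a ≤ b - a ∧
      (a * Real.log b - a * Real.log a = b - a ↔ a = b) := by
  rcases eq_or_lt_of_le ha with h0 | hapos
  · have ha0 : a = 0 := h0.symm
    subst ha0
    constructor
    · simpa using hb
    · constructor
      · intro h; simp at h; exact h
      · intro h; simp [← h]
  · have hb0 : b ≠ 0 := fun h => by
      have := hab h; exact absurd this (ne_of_gt hapos)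
    have hbpos : 0 < b := lt_of_le_of_ne hb (Ne.symm hb0)
    have hba : 0 < b / a := div_pos hbpos hapos
    have key : a * Real.log b - a * Real.log a = a * Real.log (b / a) := by
      rw [Real.log_div hb0 (ne_of_gt hapos)]; ring
    constructor
    · rw [key]
      have := Real.log_le_sub_one_of_pos hba
      calc a * Real.log (b / a) ≤ a * (b / a - 1) :=
            mul_le_mul_of_nonneg_left this ha
        _ = b - a := by field_simp
    · constructor
      · intro h
        rw [key] at h
        by_contra hne
        have hne' : b / a ≠ 1 := by
          intro h1
          exact hne ((div_eq_one_iff_eq (ne_of_gt hapos)).mp h1).symm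
        have hlt := Real.log_lt_sub_one_of_pos hba hne'
        have : a * Real.log (b / a) < a * (b / a - 1) :=
          mul_lt_mul_of_pos_left hlt hapos
        rw [h] at this
        have : b - a < b - a := by
          calc b - a < a * (b / a - 1) := this
            _ = b - a := by field_simp
        exact lt_irrefl _ this
      · intro h; subst h; simp

-- Gibbs inequality with equality case
lemma gibbs {α : Type*} [MeasureSpace α] [SigmaFinite (volume : Measure α)]
    {p q : α → ENNReal} (hp : Measurable p) (hq : Measurable q)
    (hp1 : ∫⁻ t, p t = 1) (hq1 : ∫⁻ t, q t ≤ 1)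
    (hqfin : ∀ᵐ t, q t ≠ ⊤)
    (hpq : ∀ᵐ t, q t = 0 → p t = 0)
    (hint1 : Integrable (fun t => (p t).toReal * Real.log (p t).toReal))
    (hint2 : Integrable (fun t => (p t).toReal * Real.log (q t).toReal)) :
    ∫ t, (p t).toReal * Real.log (q t).toReal ≤ ∫ t, (p t).toReal * Real.log (p t).toReal ∧
      ((∫ t, (p t).toReal * Real.log (q t).toReal = ∫ t, (p t).toReal * Real.log (p t).toReal)
        ↔ p =ᵐ[volume] q) := by
  have hpfin : ∀ᵐ t, p t ≠ ⊤ := by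
    filter_upwards [ae_lt_top hp (by rw [hp1]; exact ENNReal.one_ne_top)] with t ht
    exact ht.ne
  have hqint : Integrable (fun t => (q t).toReal) :=
    integrable_toReal_of_lintegral_ne_top hq.aemeasurable
      (by exact ne_top_of_le_ne_top ENNReal.one_ne_top hq1)
  have hpint : Integrable (fun t => (p t).toReal) :=
    integrable_toReal_of_lintegral_ne_top hp.aemeasurable (by rw [hp1]; exact ENNReal.one_ne_top)
  have hintp : ∫ t, (p t).toReal = 1 := by
    rw [integral_toReal hp.aemeasurable
      (by filter_upwards [hpfin] with t ht; exact lt_top_iff_ne_top.mpr ht), hp1]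
    rfl
  have hintq : ∫ t, (q t).toReal ≤ 1 := by
    rw [integral_toReal hq.aemeasurable
      (by filter_upwards [hqfin] with t ht; exact lt_top_iff_ne_top.mpr ht)]
    exact_mod_cast ENNReal.toReal_mono ENNReal.one_ne_top hq1
  -- a.e. pointwise inequality
  have hptws : ∀ᵐ t, (p t).toReal * Real.log ((q t).toReal)
      - (p t).toReal * Real.log ((p t).toReal) ≤ (q t).toReal - (p t).toReal := by
    filter_upwards [hpq, hqfin] with t h1 h2
    exact (real_aux ENNReal.toReal_nonneg ENNReal.toReal_nonneg
      (fun hb => by rw [ENNReal.toReal_eq_zero_iff] at hb ⊢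
                    rcases hb with hb | hb
                    · exact Or.inl (h1 hb)
                    · exact absurd hb h2)).1
  have hsub : Integrable (fun t => (p t).toReal * Real.log ((q t).toReal)
      - (p t).toReal * Real.log ((p t).toReal)) := hint2.sub hint1
  have hsub2 : Integrable (fun t => (q t).toReal - (p t).toReal) := hqint.sub hpint
  have hineq : ∫ t, ((p t).toReal * Real.log ((q t).toReal)
      - (p t).toReal * Real.log ((p t).toReal)) ≤ ∫ t, ((q t).toReal - (p t).toReal) :=
    integral_mono_ae hsub hsub2 hptws
  have hval : ∫ t, ((q t).toReal - (p t).toReal) = (∫ t, (q t).toReal) - 1 := by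
    rw [integral_sub hqint hpint, hintp]
  have hmain : (∫ t, (p t).toReal * Real.log ((q t).toReal))
      - (∫ t, (p t).toReal * Real.log ((p t).toReal)) ≤ (∫ t, (q t).toReal) - 1 := by
    rw [← integral_sub hint2 hint1, ← hval]; exact hineq
  constructor
  · linarith [hintq]
  constructor
  · -- equality implies p = q a.e.
    intro heq
    -- the nonnegative function with zero integral
    set H : α → ℝ := fun t => ((q t).toReal - (p t).toReal)
      - ((p t).toReal * Real.log ((q t).toReal) - (p t).toReal * Real.log ((p t).toReal))
      with hH
    have hHint : Integrable H := hsub2.sub hsub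
    have hHnn : 0 ≤ᵐ[volume] H := by
      filter_upwards [hptws] with t ht
      simp only [hH, Pi.zero_apply]; linarith
    have hHview : ∫ t, H t = (∫ t, (q t).toReal) - 1 := by
      simp only [hH]
      rw [integral_sub hsub2 hsub, hval, integral_sub hint2 hint1, heq]
      ring
    have hHzero : ∫ t, H t = 0 :=
      le_antisymm (by rw [hHview]; linarith [hintq]) (integral_nonneg_of_ae hHnn)
    have hH0 : H =ᵐ[volume] 0 := by
      have := (integral_eq_zero_iff_of_nonneg_ae hHnn hHint).mp hHzero
      exact this
    filter_upwards [hH0, hpq, hqfin, hpfin] with t h0 h1 h2 h3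
    have heqt : (p t).toReal * Real.log ((q t).toReal)
        - (p t).toReal * Real.log ((p t).toReal) = (q t).toReal - (p t).toReal := by
      have : H t = 0 := h0
      simp only [hH] at this; linarith
    have := (real_aux (a := (p t).toReal) (b := (q t).toReal) ENNReal.toReal_nonneg
      ENNReal.toReal_nonneg
      (fun hb => by rw [ENNReal.toReal_eq_zero_iff] at hb ⊢
                    rcases hb with hb | hb
                    · exact Or.inl (h1 hb)
                    · exact absurd hb h2)).2.mp heqt
    exact (ENNReal.toReal_eq_toReal_iff' h3 h2).mp this
  · -- p = q a.e. implies equality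
    intro heq
    apply integral_congr_ae
    filter_upwards [heq] with t ht
    rw [ht]

section supp
variable {μ : Measure ℝ}

def msupp (μ : Measure ℝ) : Set ℝ := {e | ∀ U ∈ nhds e, μ U ≠ 0}

lemma isOpen_compl_msupp : IsOpen (msupp μ)ᶜ := by
  rw [isOpen_iff_mem_nhds]
  intro t ht
  simp only [Set.mem_compl_iff, msupp, Set.mem_setOf_eq, not_forall] at ht
  obtain ⟨U, hU, hU0⟩ := ht
  push_neg at hU0
  have hint : interior U ∈ nhds t := interior_mem_nhds.mpr hU
  filter_upwards [hint] with s hs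
  simp only [Set.mem_compl_iff, msupp, Set.mem_setOf_eq, not_forall]
  refine ⟨interior U, (isOpen_interior).mem_nhds hs, ?_⟩
  push_neg
  exact le_antisymm (le_trans (measure_mono interior_subset) (le_of_eq hU0)) zero_le

lemma compl_msupp_null (μ : Measure ℝ) : μ (msupp μ)ᶜ = 0 := by
  set 𝒰 : Set (Set ℝ) := {U | IsOpen U ∧ μ U = 0} with h𝒰
  have hsub : (msupp μ)ᶜ ⊆ ⋃₀ 𝒰 := by
    intro t ht
    simp only [Set.mem_compl_iff, msupp, Set.mem_setOf_eq, not_forall] at ht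
    obtain ⟨U, hU, hU0⟩ := ht
    push_neg at hU0
    refine ⟨interior U, ⟨isOpen_interior,
      le_antisymm (le_trans (measure_mono interior_subset) (le_of_eq hU0)) zero_le⟩, ?_⟩
    rw [mem_interior_iff_mem_nhds]; exact hU
  obtain ⟨T, hTc, hT𝒰, hTU⟩ := TopologicalSpace.isOpen_sUnion_countable 𝒰 (fun s hs => hs.1)
  have : μ (⋃₀ 𝒰) = 0 := by
    rw [← hTU]
    exact (measure_sUnion_null_iff hTc).mpr (fun s hs => (hT𝒰 hs).2)
  exact le_antisymm (le_trans (measure_mono hsub) (le_of_eq this)) zero_le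

end supp

section equivmap
variable {α : Type*} [MeasureSpace α] [SigmaFinite (volume : Measure α)]

lemma map_withDensity_equiv (g : α → ENNReal) (hg : Measurable g)
    (T : α ≃ᵐ α) (hT : MeasurePreserving T volume volume) :
    ((volume : Measure α).withDensity g).map T
      = (volume : Measure α).withDensity (g ∘ T.symm) := by
  ext s hs
  rw [Measure.map_apply T.measurable hs, withDensity_apply _ (T.measurable hs),
    withDensity_apply _ hs]
  rw [← lintegral_indicator (T.measurable hs) _, ← lintegral_indicator hs _]
  conv_rhs => rw [← hT.map_eq]
  rw [lintegral_map_equiv]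
  congr 1
  ext x
  by_cases hx : T x ∈ s
  · have hx' : x ∈ T ⁻¹' s := hx
    simp [Set.indicator_of_mem hx, Set.indicator_of_mem hx', Function.comp,
      MeasurableEquiv.symm_apply_apply]
  · have hx' : x ∉ T ⁻¹' s := hx
    simp [Set.indicator_of_notMem hx, Set.indicator_of_notMem hx']

lemma rnDeriv_map_equiv (μ : Measure α) [SFinite μ] (hμ : μ ≪ volume)
    (T : α ≃ᵐ α) (hT : MeasurePreserving T volume volume) :
    (μ.map T).rnDeriv volume =ᵐ[volume] (μ.rnDeriv volume) ∘ T.symm := by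
  have h1 : μ = (volume : Measure α).withDensity (μ.rnDeriv volume) :=
    (Measure.withDensity_rnDeriv_eq μ volume hμ).symm
  calc (μ.map T).rnDeriv volume
      = (((volume : Measure α).withDensity (μ.rnDeriv volume)).map T).rnDeriv volume := by
        rw [← h1]
    _ = ((volume : Measure α).withDensity ((μ.rnDeriv volume) ∘ T.symm)).rnDeriv volume := by
        rw [map_withDensity_equiv _ (μ.measurable_rnDeriv volume) T hT]
    _ =ᵐ[volume] (μ.rnDeriv volume) ∘ T.symm :=
        Measure.rnDeriv_withDensity volume ((μ.measurable_rnDeriv volume).comp T.symm.measurable)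

/-- Entropy-type integrals are invariant under volume-preserving equivalences. -/
lemma ent_integral_map_equiv (μ : Measure α) [SFinite μ] (hμ : μ ≪ volume)
    (T : α ≃ᵐ α) (hT : MeasurePreserving T volume volume) (F : ENNReal → ℝ) :
    ∫ t, F ((μ.map T).rnDeriv volume t) = ∫ t, F (μ.rnDeriv volume t) := by
  have h1 : (fun t => F ((μ.map T).rnDeriv volume t))
      =ᵐ[volume] (fun t => F ((μ.rnDeriv volume) (T.symm t))) := by
    filter_upwards [rnDeriv_map_equiv μ hμ T hT] with t ht
    rw [ht]; rfl
  rw [integral_congr_ae h1]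
  exact (hT.symm T).integral_comp T.symm.measurableEmbedding (fun s => F (μ.rnDeriv volume s))

end equivmap

section shear
variable {β : Type*} [MeasureSpace β] [SigmaFinite (volume : Measure β)]

/-- The shear `(a, b) ↦ (a - f b, b)` as a measurable equivalence. -/
def shearEquiv (f : β → ℝ) (hf : Measurable f) : (ℝ × β) ≃ᵐ (ℝ × β) where
  toFun z := (z.1 - f z.2, z.2)
  invFun z := (z.1 + f z.2, z.2)
  left_inv z := by simp
  right_inv z := by simp
  measurable_toFun := (measurable_fst.sub (hf.comp measurable_snd)).prodMk measurable_snd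
  measurable_invFun := (measurable_fst.add (hf.comp measurable_snd)).prodMk measurable_snd

lemma shearEquiv_measurePreserving (f : β → ℝ) (hf : Measurable f) :
    MeasurePreserving (shearEquiv f hf) volume volume := by
  rw [Measure.volume_eq_prod]
  have hswap1 : MeasurePreserving (Prod.swap : ℝ × β → β × ℝ)
      ((volume : Measure ℝ).prod (volume : Measure β))
      ((volume : Measure β).prod (volume : Measure ℝ)) := Measure.measurePreserving_swap
  have hskew : MeasurePreserving (fun p : β × ℝ => (p.1, p.2 - f p.1))
      ((volume : Measure β).prod (volume : Measure ℝ))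
      ((volume : Measure β).prod (volume : Measure ℝ)) := by
    have h1 : Measurable (Function.uncurry fun (b : β) (a : ℝ) => a - f b) :=
      measurable_snd.sub (hf.comp measurable_fst)
    have h2 : ∀ᵐ b ∂(volume : Measure β),
        Measure.map (fun a : ℝ => a - f b) volume = volume := by
      refine ae_of_all _ (fun b => ?_)
      have : (fun a : ℝ => a - f b) = (fun a : ℝ => a + (-(f b))) := by
        funext a; ring
      rw [this]
      exact (measurePreserving_add_right volume (-(f b))).map_eq
    have := (MeasurePreserving.id (volume : Measure β)).skew_product h1 h2
    simpa using this
  have hswap2 : MeasurePreserving (Prod.swap : β × ℝ → ℝ × β)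
      ((volume : Measure β).prod (volume : Measure ℝ))
      ((volume : Measure ℝ).prod (volume : Measure β)) := Measure.measurePreserving_swap
  have hcomp := (hswap2.comp hskew).comp hswap1
  have hfun : ((Prod.swap ∘ fun p : β × ℝ => (p.1, p.2 - f p.1)) ∘ Prod.swap)
      = (shearEquiv f hf : ℝ × β → ℝ × β) := funext fun z => rfl
  rwa [hfun] at hcomp

end shear

section helpers
variable {α : Type*} [MeasureSpace α] [SigmaFinite (volume : Measure α)]

lemma ae_zero_of_null_set {d : α → ENNReal} (hd : Measurable d) {s : Set α}
    (hs : MeasurableSet s) (h0 : ∫⁻ t in s, d t = 0) :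
    ∀ᵐ t, t ∈ s → d t = 0 := by
  have h1 : d =ᵐ[(volume : Measure α).restrict s] 0 :=
    (lintegral_eq_zero_iff hd).mp h0
  have h2 := (ae_restrict_iff' hs).mp h1
  filter_upwards [h2] with t ht hts
  exact ht hts

lemma integrable_mul_log_of_logb {d : α → ℝ}
    (h : Integrable (fun t => d t * Real.logb 2 (d t))) :
    Integrable (fun t => d t * Real.log (d t)) := by
  have heq : (fun t => d t * Real.log (d t))
      = fun t => Real.log 2 * (d t * Real.logb 2 (d t)) := by
    funext t
    rw [Real.logb]
    have h2 : Real.log 2 ≠ 0 := by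
      have : (1 : ℝ) < 2 := one_lt_two
      exact ne_of_gt (Real.log_pos this)
    field_simp
  rw [heq]
  exact h.const_mul _

lemma dEnt_eq_log {Ω E : Type*} [MeasurableSpace Ω] [MeasureSpace E]
    (P : Measure Ω) (X : Ω → E) :
    dEnt P X = -((∫ t, ((P.map X).rnDeriv volume t).toReal
        * Real.log (((P.map X).rnDeriv volume t).toReal)) / Real.log 2) := by
  rw [dEnt]
  congr 1
  rw [← integral_div]
  congr 1
  funext t
  rw [Real.logb]
  ring

lemma pdf_mul_integrable_iff {Ω E : Type*} [MeasurableSpace Ω] [MeasureSpace E]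
    (P : Measure Ω) [IsFiniteMeasure P] (X : Ω → E) [HasPDF X P volume] {F : E → ℝ}
    (hF : AEStronglyMeasurable F (volume : Measure E)) :
    Integrable (fun t => ((P.map X).rnDeriv volume t).toReal * F t) ↔
      Integrable (fun ω => F (X ω)) P := by
  have heq : (fun t => ((P.map X).rnDeriv volume t).toReal * F t)
      = fun t => (pdf X P volume t).toReal • F t := rfl
  rw [heq, pdf.integrable_pdf_smul_iff hF]

lemma pdf_mul_integral_eq {Ω E : Type*} [MeasurableSpace Ω] [MeasureSpace E]
    (P : Measure Ω) [IsFiniteMeasure P] (X : Ω → E) [HasPDF X P volume] {F : E → ℝ}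
    (hF : AEStronglyMeasurable F (volume : Measure E)) :
    ∫ t, ((P.map X).rnDeriv volume t).toReal * F t = ∫ ω, F (X ω) ∂P := by
  have heq : (fun t => ((P.map X).rnDeriv volume t).toReal * F t)
      = fun t => (pdf X P volume t).toReal • F t := rfl
  rw [heq, pdf.integral_pdf_smul hF]

end helpers

end
end Helpers

/-- Theorem 1 of the paper: generic bound on the support length of the
estimation error `x_k - f_k(y_0,…,y_k)`, with equality iff the error is uniform and
independent (zero mutual information) of the side information. -/
theorem support_length_estimation_bound
    {Ω : Type*} [MeasurableSpace Ω] (P : Measure Ω) [IsProbabilityMeasure P]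
    (k : ℕ) (x : Ω → ℝ) (y : Fin (k + 1) → Ω → ℝ) (f : (Fin (k + 1) → ℝ) → ℝ)
    (hx : Measurable x) (hy : ∀ i, Measurable (y i)) (hf : Measurable f)
    (Y : Ω → Fin (k + 1) → ℝ) (hY : Y = fun ω i => y i ω)
    (e : Ω → ℝ) (he : e = fun ω => x ω - f (Y ω))
    -- the estimation error has a density with compact support
    (hpdf : HasPDF e P volume) (hcpt : IsCompact (mSupp P e))
    -- all differential entropies involved are well defined and finite
    (h₁ : entWellDef P e) (h₂ : entWellDef P Y)
    (h₃ : entWellDef P (fun ω => (x ω, Y ω)))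
    (h₄ : entWellDef P (fun ω => (e ω, Y ω))) :
    suppLen P e ≥ (2 : ℝ) ^ condEnt P x Y ∧
      (suppLen P e = (2 : ℝ) ^ condEnt P x Y ↔
        UnifOnSupp P e ∧ mutInfo P e Y = 0) := by
  classical
  -- measurability
  have hYm : Measurable Y := by
    rw [hY]; exact measurable_pi_lambda _ (fun i => hy i)
  have hem : Measurable e := by
    rw [he]; exact hx.sub (hf.comp hYm)
  have heYm : Measurable (fun ω => (e ω, Y ω)) := hem.prodMk hYm
  have hxYm : Measurable (fun ω => (x ω, Y ω)) := hx.prodMk hYm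
  haveI := hpdf
  haveI := h₂.1
  haveI := h₃.1
  haveI := h₄.1
  set S : Set ℝ := mSupp P e with hSdef
  set μ := P.map e with hμ
  set ν := P.map Y with hν
  set ρ := P.map (fun ω => (e ω, Y ω)) with hρ
  set σ' := P.map (fun ω => (x ω, Y ω)) with hσ
  haveI : IsProbabilityMeasure μ := Measure.isProbabilityMeasure_map hem.aemeasurable
  haveI : IsProbabilityMeasure ν := Measure.isProbabilityMeasure_map hYm.aemeasurable
  haveI : IsProbabilityMeasure ρ := Measure.isProbabilityMeasure_map heYm.aemeasurable
  haveI : IsProbabilityMeasure σ' := Measure.isProbabilityMeasure_map hxYm.aemeasurable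
  have habs : μ ≪ volume := HasPDF.absolutelyContinuous
  have habsY : ν ≪ volume := HasPDF.absolutelyContinuous
  have habsρ : ρ ≪ volume := HasPDF.absolutelyContinuous
  have habsσ : σ' ≪ volume := HasPDF.absolutelyContinuous
  -- support facts
  have hmS : S = msupp μ := rfl
  have hScl : IsClosed S := by
    rw [hmS]; exact isOpen_compl_iff.mp isOpen_compl_msupp
  have hSm : MeasurableSet S := hScl.measurableSet
  have hμSc : μ Sᶜ = 0 := by rw [hmS]; exact compl_msupp_null μ
  have hμS : μ S = 1 := (prob_compl_eq_zero_iff hSm).mp hμSc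
  have hvolS_top : volume S ≠ ⊤ := hcpt.measure_lt_top.ne
  have hvolS_0 : volume S ≠ 0 := by
    intro h
    have h2 : μ S = 0 := habs h
    rw [hμS] at h2
    exact one_ne_zero h2
  set L := (volume S).toReal with hLdef
  have hL : 0 < L := ENNReal.toReal_pos hvolS_0 hvolS_top
  have hsuppLen : suppLen P e = L := rfl
  -- densities
  set g := μ.rnDeriv volume with hg
  set dY := ν.rnDeriv volume with hdY
  set p := ρ.rnDeriv volume with hp
  set q0 : ℝ → ENNReal := S.indicator (fun _ => (volume S)⁻¹) with hq0
  have hgm : Measurable g := Measure.measurable_rnDeriv μ volume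
  have hdYm : Measurable dY := Measure.measurable_rnDeriv ν volume
  have hpm : Measurable p := Measure.measurable_rnDeriv ρ volume
  have hg1 : ∫⁻ t, g t = 1 := by
    rw [hg, Measure.lintegral_rnDeriv habs]; exact measure_univ
  have hdY1 : ∫⁻ t, dY t = 1 := by
    rw [hdY, Measure.lintegral_rnDeriv habsY]; exact measure_univ
  have hp1 : ∫⁻ t, p t = 1 := by
    rw [hp, Measure.lintegral_rnDeriv habsρ]; exact measure_univ
  have hgfin : ∀ᵐ t, g t ≠ ⊤ := by
    filter_upwards [Measure.rnDeriv_lt_top μ volume] with t ht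
    exact ht.ne
  have hdYfin : ∀ᵐ t, dY t ≠ ⊤ := by
    filter_upwards [Measure.rnDeriv_lt_top ν volume] with t ht
    exact ht.ne
  have hg_zero : ∀ᵐ t, t ∈ Sᶜ → g t = 0 := by
    refine ae_zero_of_null_set hgm hSm.compl ?_
    rw [hg, Measure.setLIntegral_rnDeriv' habs hSm.compl]
    exact hμSc
  -- Gibbs on ℝ : maximum entropy of compactly supported densities
  have hq0m : Measurable q0 := measurable_const.indicator hSm
  have hq0int : ∫⁻ t, q0 t = 1 := by
    rw [hq0, lintegral_indicator hSm, setLIntegral_const,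
      ENNReal.inv_mul_cancel hvolS_0 hvolS_top]
  have hq0fin : ∀ᵐ t, q0 t ≠ ⊤ := by
    refine ae_of_all _ (fun t => ?_)
    rw [hq0]
    by_cases hts : t ∈ S
    · rw [Set.indicator_of_mem hts]
      exact ENNReal.inv_ne_top.mpr hvolS_0
    · rw [Set.indicator_of_notMem hts]
      exact ENNReal.zero_ne_top
  have hq0pq : ∀ᵐ t, q0 t = 0 → g t = 0 := by
    filter_upwards [hg_zero] with t ht h0
    by_cases hts : t ∈ S
    · exfalso
      rw [hq0, Set.indicator_of_mem hts] at h0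
      exact (ENNReal.inv_ne_zero.mpr hvolS_top) h0
    · exact ht hts
  have hint1A : Integrable (fun t => (g t).toReal * Real.log (g t).toReal) :=
    integrable_mul_log_of_logb h₁.2
  have hgint : Integrable (fun t => (g t).toReal) :=
    integrable_toReal_of_lintegral_ne_top hgm.aemeasurable
      (by rw [hg1]; exact ENNReal.one_ne_top)
  have hintg : ∫ t, (g t).toReal = 1 := by
    rw [integral_toReal hgm.aemeasurable
      (by filter_upwards [hgfin] with t ht; exact lt_top_iff_ne_top.mpr ht), hg1]
    rfl
  have haeA : (fun t => (g t).toReal * Real.log ((q0 t).toReal))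
      =ᵐ[volume] fun t => (g t).toReal * (-Real.log L) := by
    filter_upwards [hg_zero] with t ht
    by_cases hts : t ∈ S
    · rw [hq0, Set.indicator_of_mem hts, ENNReal.toReal_inv, Real.log_inv]
    · rw [ht hts]
      simp
  have hint2A : Integrable (fun t => (g t).toReal * Real.log ((q0 t).toReal)) :=
    (hgint.mul_const _).congr haeA.symm
  have hvalA : ∫ t, (g t).toReal * Real.log ((q0 t).toReal) = -Real.log L := by
    rw [integral_congr_ae haeA, integral_mul_const, hintg, one_mul]
  obtain ⟨hineqA, hiffA⟩ := gibbs hgm hq0m hg1 (le_of_eq hq0int) hq0fin hq0pq hint1A hint2A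
  rw [hvalA] at hineqA hiffA
  -- uniformity characterization
  have hwdg : (volume : Measure ℝ).withDensity g = μ :=
    Measure.withDensity_rnDeriv_eq μ volume habs
  have hwdq : (volume : Measure ℝ).withDensity q0 = ProbabilityTheory.cond volume S := by
    rw [hq0, withDensity_indicator hSm, withDensity_const]
    rfl
  have hUiff : (g =ᵐ[volume] q0) ↔ UnifOnSupp P e := by
    constructor
    · intro hgq
      show μ = ProbabilityTheory.cond volume S
      rw [← hwdg, withDensity_congr_ae hgq, hwdq]
    · intro hU
      have hμq : μ = (volume : Measure ℝ).withDensity q0 := by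
        rw [hwdq]; exact hU
      rw [hg, hμq]
      exact Measure.rnDeriv_withDensity volume hq0m
  -- Gibbs on the product space : nonnegativity of mutual information
  haveI : SigmaFinite (volume : Measure (ℝ × (Fin (k + 1) → ℝ))) := by
    rw [Measure.volume_eq_prod]; infer_instance
  have hq2m : Measurable (fun z : ℝ × (Fin (k + 1) → ℝ) => g z.1 * dY z.2) :=
    (hgm.comp measurable_fst).mul (hdYm.comp measurable_snd)
  have hq21 : ∫⁻ z : ℝ × (Fin (k + 1) → ℝ), g z.1 * dY z.2 = 1 := by
    rw [Measure.volume_eq_prod, lintegral_prod_mul hgm.aemeasurable hdYm.aemeasurable,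
      hg1, hdY1, one_mul]
  have hnull_fst : ∀ {N : Set ℝ}, volume N = 0 →
      (volume : Measure (ℝ × (Fin (k + 1) → ℝ))) (Prod.fst ⁻¹' N) = 0 := by
    intro N h0
    rw [Measure.volume_eq_prod, ← Set.prod_univ, Measure.prod_prod, h0, zero_mul]
  have hnull_snd : ∀ {N : Set (Fin (k + 1) → ℝ)}, volume N = 0 →
      (volume : Measure (ℝ × (Fin (k + 1) → ℝ))) (Prod.snd ⁻¹' N) = 0 := by
    intro N h0
    rw [Measure.volume_eq_prod, ← Set.univ_prod, Measure.prod_prod, h0, mul_zero]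
  have hgfin2 : ∀ᵐ z : ℝ × (Fin (k + 1) → ℝ), g z.1 ≠ ⊤ := by
    rw [ae_iff]
    simp only [ne_eq, not_not]
    have : {z : ℝ × (Fin (k + 1) → ℝ) | g z.1 = ⊤} = Prod.fst ⁻¹' {a : ℝ | g a = ⊤} := rfl
    rw [this]
    refine hnull_fst ?_
    have := hgfin
    rw [ae_iff] at this
    simpa only [ne_eq, not_not] using this
  have hdYfin2 : ∀ᵐ z : ℝ × (Fin (k + 1) → ℝ), dY z.2 ≠ ⊤ := by
    rw [ae_iff]
    simp only [ne_eq, not_not]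
    have : {z : ℝ × (Fin (k + 1) → ℝ) | dY z.2 = ⊤} = Prod.snd ⁻¹' {b | dY b = ⊤} := rfl
    rw [this]
    refine hnull_snd ?_
    have := hdYfin
    rw [ae_iff] at this
    simpa only [ne_eq, not_not] using this
  have hq2fin : ∀ᵐ z : ℝ × (Fin (k + 1) → ℝ), g z.1 * dY z.2 ≠ ⊤ := by
    filter_upwards [hgfin2, hdYfin2] with z h1 h2
    exact ENNReal.mul_ne_top h1 h2
  -- the joint density vanishes a.e. where a marginal density vanishes
  have hz1 : ∀ᵐ z : ℝ × (Fin (k + 1) → ℝ), g z.1 = 0 → p z = 0 := by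
    have hNm : MeasurableSet {a : ℝ | g a = 0} := hgm (measurableSet_singleton 0)
    have hμN : μ {a : ℝ | g a = 0} = 0 := by
      rw [← Measure.setLIntegral_rnDeriv' habs hNm]
      calc ∫⁻ a in {a : ℝ | g a = 0}, μ.rnDeriv volume a
          = ∫⁻ a in {a : ℝ | g a = 0}, 0 :=
            setLIntegral_congr_fun hNm (fun a ha => ha)
        _ = 0 := lintegral_zero
    have hρval : ρ (Prod.fst ⁻¹' {a : ℝ | g a = 0}) = μ {a : ℝ | g a = 0} := by
      rw [hρ, Measure.map_apply heYm (measurable_fst hNm), hμ,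
        Measure.map_apply hem hNm]
      rfl
    have := ae_zero_of_null_set hpm (measurable_fst hNm)
      (by rw [hp, Measure.setLIntegral_rnDeriv' habsρ (measurable_fst hNm), hρval, hμN])
    filter_upwards [this] with z hz h0
    exact hz h0
  have hz2 : ∀ᵐ z : ℝ × (Fin (k + 1) → ℝ), dY z.2 = 0 → p z = 0 := by
    have hNm : MeasurableSet {b : Fin (k + 1) → ℝ | dY b = 0} :=
      hdYm (measurableSet_singleton 0)
    have hνN : ν {b | dY b = 0} = 0 := by
      rw [← Measure.setLIntegral_rnDeriv' habsY hNm]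
      calc ∫⁻ b in {b | dY b = 0}, ν.rnDeriv volume b
          = ∫⁻ b in {b | dY b = 0}, 0 :=
            setLIntegral_congr_fun hNm (fun b hb => hb)
        _ = 0 := lintegral_zero
    have hρval : ρ (Prod.snd ⁻¹' {b | dY b = 0}) = ν {b | dY b = 0} := by
      rw [hρ, Measure.map_apply heYm (measurable_snd hNm), hν,
        Measure.map_apply hYm hNm]
      rfl
    have := ae_zero_of_null_set hpm (measurable_snd hNm)
      (by rw [hp, Measure.setLIntegral_rnDeriv' habsρ (measurable_snd hNm), hρval, hνN])
    filter_upwards [this] with z hz h0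
    exact hz h0
  have hq2pq : ∀ᵐ z : ℝ × (Fin (k + 1) → ℝ), g z.1 * dY z.2 = 0 → p z = 0 := by
    filter_upwards [hz1, hz2] with z h1 h2 h0
    rcases mul_eq_zero.mp h0 with h | h
    · exact h1 h
    · exact h2 h
  have hint1B : Integrable (fun z : ℝ × (Fin (k + 1) → ℝ) =>
      (p z).toReal * Real.log (p z).toReal) := integrable_mul_log_of_logb h₄.2
  -- transfer of integrals/integrability through marginals
  have hF1meas : Measurable (fun a : ℝ => Real.log ((g a).toReal)) :=
    Real.measurable_log.comp (ENNReal.measurable_toReal.comp hgm)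
  have hF2meas : Measurable (fun b : Fin (k + 1) → ℝ => Real.log ((dY b).toReal)) :=
    Real.measurable_log.comp (ENNReal.measurable_toReal.comp hdYm)
  have I1 : Integrable (fun z : ℝ × (Fin (k + 1) → ℝ) =>
      (p z).toReal * Real.log ((g z.1).toReal)) := by
    rw [hp, hρ]
    refine (pdf_mul_integrable_iff P _
      ((hF1meas.comp measurable_fst).aestronglyMeasurable)).mpr ?_
    have := (pdf_mul_integrable_iff P e hF1meas.aestronglyMeasurable).mp
      (integrable_mul_log_of_logb h₁.2)
    exact this
  have I2 : Integrable (fun z : ℝ × (Fin (k + 1) → ℝ) =>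
      (p z).toReal * Real.log ((dY z.2).toReal)) := by
    rw [hp, hρ]
    refine (pdf_mul_integrable_iff P _
      ((hF2meas.comp measurable_snd).aestronglyMeasurable)).mpr ?_
    have := (pdf_mul_integrable_iff P Y hF2meas.aestronglyMeasurable).mp
      (integrable_mul_log_of_logb h₂.2)
    exact this
  have hval1 : ∫ z : ℝ × (Fin (k + 1) → ℝ), (p z).toReal * Real.log ((g z.1).toReal)
      = ∫ a, (g a).toReal * Real.log ((g a).toReal) := by
    rw [hp, hρ]
    rw [pdf_mul_integral_eq P _ ((hF1meas.comp measurable_fst).aestronglyMeasurable)]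
    have := pdf_mul_integral_eq P e hF1meas.aestronglyMeasurable
    rw [← hg] at this
    rw [← this]
  have hval2 : ∫ z : ℝ × (Fin (k + 1) → ℝ), (p z).toReal * Real.log ((dY z.2).toReal)
      = ∫ b, (dY b).toReal * Real.log ((dY b).toReal) := by
    rw [hp, hρ]
    rw [pdf_mul_integral_eq P _ ((hF2meas.comp measurable_snd).aestronglyMeasurable)]
    have := pdf_mul_integral_eq P Y hF2meas.aestronglyMeasurable
    rw [← hdY] at this
    rw [← this]
  -- splitting of log of the product density
  have haeB : (fun z : ℝ × (Fin (k + 1) → ℝ) =>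
        (p z).toReal * Real.log ((g z.1 * dY z.2).toReal))
      =ᵐ[volume] fun z => (p z).toReal * Real.log ((g z.1).toReal)
        + (p z).toReal * Real.log ((dY z.2).toReal) := by
    filter_upwards [hz1, hz2, hgfin2, hdYfin2] with z h1 h2 h3 h4
    by_cases hg0 : g z.1 = 0
    · simp [h1 hg0]
    by_cases hd0 : dY z.2 = 0
    · simp [h2 hd0]
    rw [ENNReal.toReal_mul, Real.log_mul
      (ENNReal.toReal_ne_zero.mpr ⟨hg0, h3⟩) (ENNReal.toReal_ne_zero.mpr ⟨hd0, h4⟩)]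
    ring
  have hint2B : Integrable (fun z : ℝ × (Fin (k + 1) → ℝ) =>
      (p z).toReal * Real.log ((g z.1 * dY z.2).toReal)) :=
    (I1.add I2).congr haeB.symm
  have hvalB : ∫ z : ℝ × (Fin (k + 1) → ℝ),
        (p z).toReal * Real.log ((g z.1 * dY z.2).toReal)
      = (∫ a, (g a).toReal * Real.log ((g a).toReal))
        + ∫ b, (dY b).toReal * Real.log ((dY b).toReal) := by
    rw [integral_congr_ae haeB, integral_add I1 I2, hval1, hval2]
  obtain ⟨hineqB, -⟩ := gibbs hpm hq2m hp1 (le_of_eq hq21) hq2fin hq2pq hint1B hint2B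
  rw [hvalB] at hineqB
  -- shear invariance : h(e, Y) = h(x, Y)
  have hT := shearEquiv_measurePreserving (β := Fin (k + 1) → ℝ) f hf
  have hmapT : ρ = σ'.map (shearEquiv f hf) := by
    rw [hρ, hσ, Measure.map_map (shearEquiv f hf).measurable hxYm]
    congr 1
    funext ω
    show (e ω, Y ω) = (shearEquiv f hf) (x ω, Y ω)
    rw [he]
    rfl
  have hentC : dEnt P (fun ω => (e ω, Y ω)) = dEnt P (fun ω => (x ω, Y ω)) := by
    simp only [dEnt]
    congr 1
    rw [← hρ, ← hσ, hmapT]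
    exact ent_integral_map_equiv σ' habsσ (shearEquiv f hf) hT
      (fun r => r.toReal * Real.logb 2 r.toReal)
  -- final arithmetic
  set A := ∫ a, (g a).toReal * Real.log ((g a).toReal) with hA
  set B := ∫ b, (dY b).toReal * Real.log ((dY b).toReal) with hB
  set C := ∫ z : ℝ × (Fin (k + 1) → ℝ), (p z).toReal * Real.log ((p z).toReal) with hC
  have c2 : (0 : ℝ) < Real.log 2 := Real.log_pos one_lt_two
  have hdEnte : dEnt P e = -(A / Real.log 2) := by
    rw [dEnt_eq_log P e, ← hμ, ← hg, ← hA]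
  have hdEntY : dEnt P Y = -(B / Real.log 2) := by
    rw [dEnt_eq_log P Y, ← hν, ← hdY, ← hB]
  have hdEntEY : dEnt P (fun ω => (e ω, Y ω)) = -(C / Real.log 2) := by
    rw [dEnt_eq_log P (fun ω => (e ω, Y ω)), ← hρ, ← hp, ← hC]
  have hcond : condEnt P x Y = (B - C) / Real.log 2 := by
    simp only [condEnt]
    rw [← hentC, hdEntEY, hdEntY]
    ring
  have hmut : mutInfo P e Y = (C - (A + B)) / Real.log 2 := by
    simp only [mutInfo]
    rw [hdEnte, hdEntY, hdEntEY]
    ring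
  have hlogbL : Real.logb 2 L = Real.log L / Real.log 2 := rfl
  have hcondle : condEnt P x Y ≤ Real.logb 2 L := by
    rw [hcond, hlogbL]
    have hnum : B - C ≤ Real.log L := by linarith
    exact (div_le_div_iff_of_pos_right c2).mpr hnum
  constructor
  · rw [ge_iff_le, hsuppLen]
    calc (2 : ℝ) ^ condEnt P x Y ≤ (2 : ℝ) ^ Real.logb 2 L :=
        Real.rpow_le_rpow_of_exponent_le one_le_two hcondle
      _ = L := Real.rpow_logb (by norm_num) (by norm_num) hL
  · constructor
    · intro hEq
      rw [hsuppLen] at hEq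
      have hclog : condEnt P x Y = Real.logb 2 L := by
        rw [hEq, Real.logb_rpow (by norm_num) (by norm_num)]
      have h1 : B - C = Real.log L := by
        rw [hcond, hlogbL, div_eq_div_iff (ne_of_gt c2) (ne_of_gt c2)] at hclog
        exact mul_right_cancel₀ (ne_of_gt c2) hclog
      have hAeq : A = -Real.log L := by linarith
      have hCeq : C = A + B := by linarith
      constructor
      · exact hUiff.mp (hiffA.mp hAeq.symm)
      · rw [hmut, hCeq]
        simp
    · rintro ⟨hU, hm0⟩
      have hAeq : A = -Real.log L := (hiffA.mpr (hUiff.mpr hU)).symm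
      have hCeq : C = A + B := by
        rw [hmut] at hm0
        have := (div_eq_zero_iff.mp hm0).resolve_right (ne_of_gt c2)
        linarith
      have hclog : condEnt P x Y = Real.logb 2 L := by
        rw [hcond, hCeq, hAeq, hlogbL]
        ring
      rw [hsuppLen, hclog, Real.rpow_logb (by norm_num) (by norm_num) hL]
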